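/- Let E be a real inner product space that is also an ordered vector space whose order is directed, and suppose the positive cone E⁺ = {z ∈ E : 0 ≤ z} is a Chebyshev set in E with metric projection P = P_{E⁺} which is isotone and subadditive. Then whenever 0 ≤ x ≤ y in E, one has ‖x‖ ≤ ‖y‖. -/

import Mathlib

/-- `p` is a best approximation to `x` from the set `A`. -/
def IsBestApprox {E : Type*} [NormedAddCommGroup E] (A : Set E) (x p : E) : Prop :=
  p ∈ A ∧ ∀ y ∈ A, ‖x - p‖ ≤ ‖x - y‖

/-- If the positive cone of a directed ordered inner product space is a Chebyshev set and
the metric projection `P` is isotone and subadditive, then `0 ≤ x ≤ y` implies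
`‖x‖ ≤ ‖y‖`. -/
theorem stmt_10 {E : Type*} [NormedAddCommGroup E] [InnerProductSpace ℝ E] [PartialOrder E]
    (hadd : ∀ x y z : E, x ≤ y → x + z ≤ y + z)
    (hsmul : ∀ (t : ℝ) (x : E), 0 ≤ t → 0 ≤ x → 0 ≤ t • x)
    (hdir : ∀ x y : E, ∃ z : E, x ≤ z ∧ y ≤ z)
    (P : E → E)
    (hP : ∀ x : E, IsBestApprox {z : E | 0 ≤ z} x (P x))
    (hPuniq : ∀ x q : E, IsBestApprox {z : E | 0 ≤ z} x q → q = P x)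
    (hiso : ∀ x y : E, x ≤ y → P x ≤ P y)
    (hsub : ∀ x y : E, P (x + y) ≤ P x + P y) :
    ∀ x y : E, 0 ≤ x → x ≤ y → ‖x‖ ≤ ‖y‖ := by
  -- P 0 = 0
  have hP0 : P 0 = 0 := by
    have h : IsBestApprox {z : E | 0 ≤ z} 0 0 := by
      refine ⟨le_refl 0, fun y _ => ?_⟩
      simp [norm_nonneg]
    exact (hPuniq 0 0 h).symm
  -- the cone is subdual
  have hsd : ∀ v a : E, 0 ≤ v → 0 ≤ a → 0 ≤ (inner ℝ v a : ℝ) := by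
    intro v a hv ha
    have hneg : -v ≤ 0 := by
      have := hadd 0 v (-v) hv
      simpa using this
    have hPneg : P (-v) = 0 := by
      refine le_antisymm ?_ (hP (-v)).1
      rw [← hP0]
      exact hiso _ _ hneg
    have hbest := (hP (-v)).2
    rw [hPneg] at hbest
    -- ∀ y ∈ cone, ‖-v - 0‖ ≤ ‖-v - y‖
    by_cases hA : a = 0
    · simp [hA]
    by_contra hc
    push_neg at hc
    set c : ℝ := (inner ℝ v a : ℝ) with hcdef
    have hna : (0:ℝ) < ‖a‖ ^ 2 := pow_pos (norm_pos_iff.mpr hA) 2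
    set t : ℝ := -c / ‖a‖ ^ 2 with htdef
    have ht : 0 ≤ t := by
      apply div_nonneg _ (le_of_lt hna)
      linarith
    have hmem : t • a ∈ {z : E | 0 ≤ z} := hsmul t a ht ha
    have hle := hbest _ hmem
    have hnorm : ‖-v - t • a‖ = ‖v + t • a‖ := by
      rw [← norm_neg]
      congr 1
      abel
    rw [sub_zero, norm_neg, hnorm] at hle
    have hsq : ‖v‖ ^ 2 ≤ ‖v + t • a‖ ^ 2 :=
      pow_le_pow_left₀ (norm_nonneg v) hle 2
    rw [norm_add_sq_real, real_inner_smul_right, norm_smul] at hsq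
    simp only [Real.norm_eq_abs] at hsq
    have habs : |t| = t := abs_of_nonneg ht
    rw [habs] at hsq
    have htval : t * ‖a‖ ^ 2 = -c := by
      rw [htdef]
      exact div_mul_cancel₀ _ hna.ne'
    nlinarith [mul_pow t ‖a‖ 2]
  intro x y hx hxy
  have hy : 0 ≤ y := le_trans hx hxy
  have h1 : 0 ≤ y - x := by
    have := hadd x y (-x) hxy
    simpa [sub_eq_add_neg] using this
  have h2 : 0 ≤ y + x := by
    have := hadd 0 y x hy
    simp at this
    exact le_trans hx this
  have hkey := hsd _ _ h1 h2
  have hexp : (inner ℝ (y - x) (y + x) : ℝ) = ‖y‖ ^ 2 - ‖x‖ ^ 2 := by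
    rw [inner_sub_left, inner_add_right, inner_add_right,
      real_inner_self_eq_norm_sq, real_inner_self_eq_norm_sq, real_inner_comm x y]
    ring
  rw [hexp] at hkey
  nlinarith [norm_nonneg x, norm_nonneg y]
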